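/- Let h be an invertible symmetric 2×2 real matrix with det h < 0 (signature (1,1)), let β ∈ ℝ² be nonzero and null (⟨β,β⟩ = 0), let σ be a symmetric 2×2 real matrix with h-trace zero (h^{ab} σ_{ab} = 0), and let α ∈ ℝ² with F := ⟨α,β⟩ ≠ 0, such that for all a, b, c ∈ {1,2}: β_a σ_{bc} + β_b σ_{ca} + β_c σ_{ab} = α_a h_{bc} + α_b h_{ca} + α_c h_{ab}. Then α is null (⟨α,α⟩ = 0), h_{ab} = (α_a β_b + β_a α_b)/F, and σ_{ab} = 2 α_a α_b / F. (This is case (c) of the paper's Proposition 5, occurring only in spacetime dimension m = 3.) -/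
import Mathlib

open scoped BigOperators

noncomputable section

/-- The pairing `⟨u,v⟩ = h^{ab} u_a v_b` of covectors defined by the inverse
of the 2×2 matrix `h`. -/
def pairing (h : Matrix (Fin 2) (Fin 2) ℝ) (u v : Fin 2 → ℝ) : ℝ :=
  ∑ a, ∑ b, h⁻¹ a b * u a * v b

lemma inv_contract (h : Matrix (Fin 2) (Fin 2) ℝ) (f : Fin 2 → Fin 2 → ℝ) :
    ∑ a, ∑ b, h⁻¹ a b * f a b =
      (h 1 1 * f 0 0 - h 0 1 * f 0 1 - h 1 0 * f 1 0 + h 0 0 * f 1 1) / h.det := by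
  rw [Matrix.inv_def, Matrix.adjugate_fin_two]
  simp [Fin.sum_univ_two, Ring.inverse_eq_inv', Matrix.smul_apply, div_eq_inv_mul]
  ring

lemma pairing_eq (h : Matrix (Fin 2) (Fin 2) ℝ) (u v : Fin 2 → ℝ) :
    pairing h u v =
      (h 1 1 * u 0 * v 0 - h 0 1 * u 0 * v 1 - h 1 0 * u 1 * v 0 + h 0 0 * u 1 * v 1) / h.det := by
  have := inv_contract h (fun a b => u a * v b)
  simpa [pairing, mul_assoc] using this

/-- case (c) of Proposition 5 of the paper, spacetime dimension m = 3:
for a signature-(1,1) metric `h`, a nonzero null `β`, a traceless symmetric `σ` and `α`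
with `F = ⟨α,β⟩ ≠ 0` satisfying
`β_a σ_bc + β_b σ_ca + β_c σ_ab = α_a h_bc + α_b h_ca + α_c h_ab`,
one has `⟨α,α⟩ = 0`, `h_ab = (α_a β_b + β_a α_b)/F` and `σ_ab = 2 α_a α_b / F`. -/
theorem three_dimensional_mixed_case
    (h : Matrix (Fin 2) (Fin 2) ℝ) (hsymm : ∀ a b, h a b = h b a)
    (hdet : h.det < 0)
    (β : Fin 2 → ℝ) (hβ0 : β ≠ 0) (hβnull : pairing h β β = 0)
    (σ : Matrix (Fin 2) (Fin 2) ℝ) (hσsymm : ∀ a b, σ a b = σ b a)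
    (hσtr : ∑ a, ∑ b, h⁻¹ a b * σ a b = 0)
    (α : Fin 2 → ℝ) (hF : pairing h α β ≠ 0)
    (heq : ∀ a b c,
      β a * σ b c + β b * σ c a + β c * σ a b =
        α a * h b c + α b * h c a + α c * h a b) :
    pairing h α α = 0 ∧
    (∀ a b, h a b = (α a * β b + β a * α b) / pairing h α β) ∧
    (∀ a b, σ a b = 2 * α a * α b / pairing h α β) := by
  have hs10 : h 1 0 = h 0 1 := hsymm 1 0
  have hss10 : σ 1 0 = σ 0 1 := hσsymm 1 0
  have hdne : h.det ≠ 0 := ne_of_lt hdet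
  have hdet2 : h.det = h 0 0 * h 1 1 - h 0 1 * h 0 1 := by
    rw [Matrix.det_fin_two, hs10]
  have hd : h 0 0 * h 1 1 - h 0 1 * h 0 1 ≠ 0 := hdet2 ▸ hdne
  have hC1 : (h 1 1*β 0*β 0 - 2*h 0 1*β 0*β 1 + h 0 0*β 1*β 1) = 0 := by
    have e := hβnull
    rw [pairing_eq] at e
    have e2 := (div_eq_zero_iff.mp e).resolve_right hdne
    linear_combination e2 + β 0*β 1*hs10
  have hC2 : h 1 1*σ 0 0 - 2*h 0 1*σ 0 1 + h 0 0*σ 1 1 = 0 := by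
    have e := hσtr
    rw [inv_contract h σ] at e
    have e2 := (div_eq_zero_iff.mp e).resolve_right hdne
    linear_combination e2 + σ 1 0*hs10 + h 0 1*hss10
  have hE0 : β 0*σ 0 0 - α 0*h 0 0 = 0 := by
    have e := heq 0 0 0; linear_combination e/3
  have hE1 : 2*β 0*σ 0 1 + β 1*σ 0 0 - 2*α 0*h 0 1 - α 1*h 0 0 = 0 := by
    have e := heq 0 0 1; linear_combination e - β 0*hss10 + α 0*hs10
  have hE2 : 2*β 1*σ 0 1 + β 0*σ 1 1 - 2*α 1*h 0 1 - α 0*h 1 1 = 0 := by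
    have e := heq 0 1 1; linear_combination e - β 1*hss10 + α 1*hs10
  have hE3 : β 1*σ 1 1 - α 1*h 1 1 = 0 := by
    have e := heq 1 1 1; linear_combination e/3
  have hFP : pairing h α β = (h 1 1*α 0*β 0 - h 0 1*α 0*β 1 - h 0 1*α 1*β 0 + h 0 0*α 1*β 1) / h.det := by
    rw [pairing_eq]
    congr 1
    linear_combination -(α 1*β 0)*hs10
  have hP : (h 1 1*α 0*β 0 - h 0 1*α 0*β 1 - h 0 1*α 1*β 0 + h 0 0*α 1*β 1) ≠ 0 := by
    intro h0
    exact hF (by rw [hFP, h0, zero_div])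
  have hQ0 : σ 0 0*(h 1 1*β 0 - h 0 1*β 1) + σ 0 1*(h 0 0*β 1 - h 0 1*β 0) - 2*(h 0 0*h 1 1 - h 0 1*h 0 1)*α 0 = 0 := by
    linear_combination (3*h 1 1/2)*hE0 - h 0 1*hE1 + (h 0 0/2)*hE2 - (β 0/2)*hC2
  have hQ1 : σ 0 1*(h 1 1*β 0 - h 0 1*β 1) + σ 1 1*(h 0 0*β 1 - h 0 1*β 0) - 2*(h 0 0*h 1 1 - h 0 1*h 0 1)*α 1 = 0 := by
    linear_combination (h 1 1/2)*hE1 - h 0 1*hE2 + (3*h 0 0/2)*hE3 - (β 1/2)*hC2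
  have hAb0 : (h 1 1*α 0*α 0 - 2*h 0 1*α 0*α 1 + h 0 0*α 1*α 1)*((h 0 0*h 1 1 - h 0 1*h 0 1)*β 0) = 0 := by
    linear_combination (3*(h 1 1*β 0 - h 0 1*β 1)*(h 1 1*α 0 - h 0 1*α 1))*hE0 + ((h 1 1*β 0 - h 0 1*β 1)*(h 0 0*α 1 - h 0 1*α 0)+(h 0 0*β 1 - h 0 1*β 0)*(h 1 1*α 0 - h 0 1*α 1))*hE1 + ((h 0 0*β 1 - h 0 1*β 0)*(h 0 0*α 1 - h 0 1*α 0))*hE2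
      - (β 0*(h 1 1*α 0 - h 0 1*α 1)+(h 1 1*α 0*β 0 - h 0 1*α 0*β 1 - h 0 1*α 1*β 0 + h 0 0*α 1*β 1))*hQ0 - (β 0*(h 0 0*α 1 - h 0 1*α 0))*hQ1 - (σ 0 0*(h 1 1*α 0 - h 0 1*α 1)+σ 0 1*(h 0 0*α 1 - h 0 1*α 0))*hC1
  have hAb1 : (h 1 1*α 0*α 0 - 2*h 0 1*α 0*α 1 + h 0 0*α 1*α 1)*((h 0 0*h 1 1 - h 0 1*h 0 1)*β 1) = 0 := by
    linear_combination ((h 1 1*β 0 - h 0 1*β 1)*(h 1 1*α 0 - h 0 1*α 1))*hE1 + ((h 1 1*β 0 - h 0 1*β 1)*(h 0 0*α 1 - h 0 1*α 0)+(h 0 0*β 1 - h 0 1*β 0)*(h 1 1*α 0 - h 0 1*α 1))*hE2 + (3*(h 0 0*β 1 - h 0 1*β 0)*(h 0 0*α 1 - h 0 1*α 0))*hE3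
      - (β 1*(h 1 1*α 0 - h 0 1*α 1))*hQ0 - (β 1*(h 0 0*α 1 - h 0 1*α 0)+(h 1 1*α 0*β 0 - h 0 1*α 0*β 1 - h 0 1*α 1*β 0 + h 0 0*α 1*β 1))*hQ1 - (σ 0 1*(h 1 1*α 0 - h 0 1*α 1)+σ 1 1*(h 0 0*α 1 - h 0 1*α 0))*hC1
  have hb01 : β 0 ≠ 0 ∨ β 1 ≠ 0 := by
    by_contra hc
    push_neg at hc
    apply hβ0
    funext i
    fin_cases i
    · exact hc.1
    · exact hc.2
  have hA : (h 1 1*α 0*α 0 - 2*h 0 1*α 0*α 1 + h 0 0*α 1*α 1) = 0 := by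
    rcases hb01 with hi | hi
    · exact (mul_eq_zero.mp hAb0).resolve_right (mul_ne_zero hd hi)
    · exact (mul_eq_zero.mp hAb1).resolve_right (mul_ne_zero hd hi)
  have hDsq : (h 0 0*h 1 1 - h 0 1*h 0 1)*(α 0*β 1 - α 1*β 0)^2 = -(h 1 1*α 0*β 0 - h 0 1*α 0*β 1 - h 0 1*α 1*β 0 + h 0 0*α 1*β 1)^2 := by
    linear_combination (h 1 1*β 0*β 0 - 2*h 0 1*β 0*β 1 + h 0 0*β 1*β 1)*hA
  have hD : (α 0*β 1 - α 1*β 0) ≠ 0 := by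
    intro h0
    have hz : (h 1 1*α 0*β 0 - h 0 1*α 0*β 1 - h 0 1*α 1*β 0 + h 0 0*α 1*β 1)^2 = 0 := by linear_combination hDsq - ((h 0 0*h 1 1 - h 0 1*h 0 1)*(α 0*β 1 - α 1*β 0))*h0
    exact hP ((pow_eq_zero_iff (two_ne_zero)).mp hz)
  have hdD : (h 0 0*h 1 1 - h 0 1*h 0 1)*(α 0*β 1 - α 1*β 0) ≠ 0 := mul_ne_zero hd hD

  have hGV0 : ((h 1 1*α 0*β 0 - h 0 1*α 0*β 1 - h 0 1*α 1*β 0 + h 0 0*α 1*β 1)*h 0 0 - (h 0 0*h 1 1 - h 0 1*h 0 1)*(α 0*β 0 + β 0*α 0))*(h 1 1*β 0 - h 0 1*β 1) + ((h 1 1*α 0*β 0 - h 0 1*α 0*β 1 - h 0 1*α 1*β 0 + h 0 0*α 1*β 1)*h 0 1 - (h 0 0*h 1 1 - h 0 1*h 0 1)*(α 0*β 1 + β 0*α 1))*(h 0 0*β 1 - h 0 1*β 0) = 0 := by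
    linear_combination (-((h 0 0*h 1 1 - h 0 1*h 0 1)*α 0))*hC1
  have hGW0 : ((h 1 1*α 0*β 0 - h 0 1*α 0*β 1 - h 0 1*α 1*β 0 + h 0 0*α 1*β 1)*h 0 0 - (h 0 0*h 1 1 - h 0 1*h 0 1)*(α 0*β 0 + β 0*α 0))*(h 1 1*α 0 - h 0 1*α 1) + ((h 1 1*α 0*β 0 - h 0 1*α 0*β 1 - h 0 1*α 1*β 0 + h 0 0*α 1*β 1)*h 0 1 - (h 0 0*h 1 1 - h 0 1*h 0 1)*(α 0*β 1 + β 0*α 1))*(h 0 0*α 1 - h 0 1*α 0) = 0 := by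
    linear_combination (-((h 0 0*h 1 1 - h 0 1*h 0 1)*β 0))*hA
  have hGp00 : ((h 1 1*α 0*β 0 - h 0 1*α 0*β 1 - h 0 1*α 1*β 0 + h 0 0*α 1*β 1)*h 0 0 - (h 0 0*h 1 1 - h 0 1*h 0 1)*(α 0*β 0 + β 0*α 0))*((h 0 0*h 1 1 - h 0 1*h 0 1)*(α 0*β 1 - α 1*β 0)) = 0 := by
    linear_combination (h 0 0*β 1 - h 0 1*β 0)*hGW0 - (h 0 0*α 1 - h 0 1*α 0)*hGV0
  have hGp01 : ((h 1 1*α 0*β 0 - h 0 1*α 0*β 1 - h 0 1*α 1*β 0 + h 0 0*α 1*β 1)*h 0 1 - (h 0 0*h 1 1 - h 0 1*h 0 1)*(α 0*β 1 + β 0*α 1))*((h 0 0*h 1 1 - h 0 1*h 0 1)*(α 0*β 1 - α 1*β 0)) = 0 := by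
    linear_combination (h 1 1*α 0 - h 0 1*α 1)*hGV0 - (h 1 1*β 0 - h 0 1*β 1)*hGW0
  have hH00 : (h 1 1*α 0*β 0 - h 0 1*α 0*β 1 - h 0 1*α 1*β 0 + h 0 0*α 1*β 1)*h 0 0 - (h 0 0*h 1 1 - h 0 1*h 0 1)*(α 0*β 0 + β 0*α 0) = 0 := (mul_eq_zero.mp hGp00).resolve_right hdD
  have hH01 : (h 1 1*α 0*β 0 - h 0 1*α 0*β 1 - h 0 1*α 1*β 0 + h 0 0*α 1*β 1)*h 0 1 - (h 0 0*h 1 1 - h 0 1*h 0 1)*(α 0*β 1 + β 0*α 1) = 0 := (mul_eq_zero.mp hGp01).resolve_right hdD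

  have hGV1 : ((h 1 1*α 0*β 0 - h 0 1*α 0*β 1 - h 0 1*α 1*β 0 + h 0 0*α 1*β 1)*h 0 1 - (h 0 0*h 1 1 - h 0 1*h 0 1)*(α 1*β 0 + β 1*α 0))*(h 1 1*β 0 - h 0 1*β 1) + ((h 1 1*α 0*β 0 - h 0 1*α 0*β 1 - h 0 1*α 1*β 0 + h 0 0*α 1*β 1)*h 1 1 - (h 0 0*h 1 1 - h 0 1*h 0 1)*(α 1*β 1 + β 1*α 1))*(h 0 0*β 1 - h 0 1*β 0) = 0 := by
    linear_combination (-((h 0 0*h 1 1 - h 0 1*h 0 1)*α 1))*hC1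
  have hGW1 : ((h 1 1*α 0*β 0 - h 0 1*α 0*β 1 - h 0 1*α 1*β 0 + h 0 0*α 1*β 1)*h 0 1 - (h 0 0*h 1 1 - h 0 1*h 0 1)*(α 1*β 0 + β 1*α 0))*(h 1 1*α 0 - h 0 1*α 1) + ((h 1 1*α 0*β 0 - h 0 1*α 0*β 1 - h 0 1*α 1*β 0 + h 0 0*α 1*β 1)*h 1 1 - (h 0 0*h 1 1 - h 0 1*h 0 1)*(α 1*β 1 + β 1*α 1))*(h 0 0*α 1 - h 0 1*α 0) = 0 := by
    linear_combination (-((h 0 0*h 1 1 - h 0 1*h 0 1)*β 1))*hA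
  have hGp10 : ((h 1 1*α 0*β 0 - h 0 1*α 0*β 1 - h 0 1*α 1*β 0 + h 0 0*α 1*β 1)*h 0 1 - (h 0 0*h 1 1 - h 0 1*h 0 1)*(α 1*β 0 + β 1*α 0))*((h 0 0*h 1 1 - h 0 1*h 0 1)*(α 0*β 1 - α 1*β 0)) = 0 := by
    linear_combination (h 0 0*β 1 - h 0 1*β 0)*hGW1 - (h 0 0*α 1 - h 0 1*α 0)*hGV1
  have hGp11 : ((h 1 1*α 0*β 0 - h 0 1*α 0*β 1 - h 0 1*α 1*β 0 + h 0 0*α 1*β 1)*h 1 1 - (h 0 0*h 1 1 - h 0 1*h 0 1)*(α 1*β 1 + β 1*α 1))*((h 0 0*h 1 1 - h 0 1*h 0 1)*(α 0*β 1 - α 1*β 0)) = 0 := by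
    linear_combination (h 1 1*α 0 - h 0 1*α 1)*hGV1 - (h 1 1*β 0 - h 0 1*β 1)*hGW1
  have hH10 : (h 1 1*α 0*β 0 - h 0 1*α 0*β 1 - h 0 1*α 1*β 0 + h 0 0*α 1*β 1)*h 0 1 - (h 0 0*h 1 1 - h 0 1*h 0 1)*(α 1*β 0 + β 1*α 0) = 0 := (mul_eq_zero.mp hGp10).resolve_right hdD
  have hH11 : (h 1 1*α 0*β 0 - h 0 1*α 0*β 1 - h 0 1*α 1*β 0 + h 0 0*α 1*β 1)*h 1 1 - (h 0 0*h 1 1 - h 0 1*h 0 1)*(α 1*β 1 + β 1*α 1) = 0 := (mul_eq_zero.mp hGp11).resolve_right hdD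

  have h3Pt : (σ 0 0*(h 1 1*α 0 - h 0 1*α 1)*(h 1 1*α 0 - h 0 1*α 1) + 2*σ 0 1*(h 1 1*α 0 - h 0 1*α 1)*(h 0 0*α 1 - h 0 1*α 0) + σ 1 1*(h 0 0*α 1 - h 0 1*α 0)*(h 0 0*α 1 - h 0 1*α 0))*(3*(h 1 1*α 0*β 0 - h 0 1*α 0*β 1 - h 0 1*α 1*β 0 + h 0 0*α 1*β 1)) = 0 := by
    linear_combination (3*(h 1 1*α 0 - h 0 1*α 1)^3)*hE0 + (3*(h 1 1*α 0 - h 0 1*α 1)^2*(h 0 0*α 1 - h 0 1*α 0))*hE1 + (3*(h 1 1*α 0 - h 0 1*α 1)*(h 0 0*α 1 - h 0 1*α 0)^2)*hE2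
      + (3*(h 0 0*α 1 - h 0 1*α 0)^3)*hE3 + (3*(h 0 0*h 1 1 - h 0 1*h 0 1)*(h 1 1*α 0*α 0 - 2*h 0 1*α 0*α 1 + h 0 0*α 1*α 1))*hA
  have hT : (σ 0 0*(h 1 1*α 0 - h 0 1*α 1)*(h 1 1*α 0 - h 0 1*α 1) + 2*σ 0 1*(h 1 1*α 0 - h 0 1*α 1)*(h 0 0*α 1 - h 0 1*α 0) + σ 1 1*(h 0 0*α 1 - h 0 1*α 0)*(h 0 0*α 1 - h 0 1*α 0)) = 0 := by
    have h3 : (3:ℝ)*(h 1 1*α 0*β 0 - h 0 1*α 0*β 1 - h 0 1*α 1*β 0 + h 0 0*α 1*β 1) ≠ 0 := mul_ne_zero three_ne_zero hP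
    exact (mul_eq_zero.mp h3Pt).resolve_right h3

  have hsGW0 : (((h 1 1*α 0*β 0 - h 0 1*α 0*β 1 - h 0 1*α 1*β 0 + h 0 0*α 1*β 1)*σ 0 0 - 2*(h 0 0*h 1 1 - h 0 1*h 0 1)*α 0*α 0)*(h 1 1*α 0 - h 0 1*α 1) + ((h 1 1*α 0*β 0 - h 0 1*α 0*β 1 - h 0 1*α 1*β 0 + h 0 0*α 1*β 1)*σ 0 1 - 2*(h 0 0*h 1 1 - h 0 1*h 0 1)*α 0*α 1)*(h 0 0*α 1 - h 0 1*α 0))*(2*(h 1 1*α 0*β 0 - h 0 1*α 0*β 1 - h 0 1*α 1*β 0 + h 0 0*α 1*β 1)) = 0 := by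
    linear_combination ((h 1 1*α 0*β 0 - h 0 1*α 0*β 1 - h 0 1*α 1*β 0 + h 0 0*α 1*β 1)*(3*(h 1 1*α 0 - h 0 1*α 1)*(h 1 1*α 0 - h 0 1*α 1)))*hE0 + ((h 1 1*α 0*β 0 - h 0 1*α 0*β 1 - h 0 1*α 1*β 0 + h 0 0*α 1*β 1)*(2*(h 1 1*α 0 - h 0 1*α 1)*(h 0 0*α 1 - h 0 1*α 0)))*hE1 + ((h 1 1*α 0*β 0 - h 0 1*α 0*β 1 - h 0 1*α 1*β 0 + h 0 0*α 1*β 1)*((h 0 0*α 1 - h 0 1*α 0)*(h 0 0*α 1 - h 0 1*α 0)))*hE2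
      + ((h 1 1*α 0*β 0 - h 0 1*α 0*β 1 - h 0 1*α 1*β 0 + h 0 0*α 1*β 1)*(0))*hE3 + (-((h 0 0*h 1 1 - h 0 1*h 0 1)*(h 1 1*α 0*β 0 - h 0 1*α 0*β 1 - h 0 1*α 1*β 0 + h 0 0*α 1*β 1)*α 0))*hA + (-((h 1 1*α 0*β 0 - h 0 1*α 0*β 1 - h 0 1*α 1*β 0 + h 0 0*α 1*β 1)*β 0))*hT
  have hsGW0' : ((h 1 1*α 0*β 0 - h 0 1*α 0*β 1 - h 0 1*α 1*β 0 + h 0 0*α 1*β 1)*σ 0 0 - 2*(h 0 0*h 1 1 - h 0 1*h 0 1)*α 0*α 0)*(h 1 1*α 0 - h 0 1*α 1) + ((h 1 1*α 0*β 0 - h 0 1*α 0*β 1 - h 0 1*α 1*β 0 + h 0 0*α 1*β 1)*σ 0 1 - 2*(h 0 0*h 1 1 - h 0 1*h 0 1)*α 0*α 1)*(h 0 0*α 1 - h 0 1*α 0) = 0 := by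
    have h2 : (2:ℝ)*(h 1 1*α 0*β 0 - h 0 1*α 0*β 1 - h 0 1*α 1*β 0 + h 0 0*α 1*β 1) ≠ 0 := mul_ne_zero two_ne_zero hP
    exact (mul_eq_zero.mp hsGW0).resolve_right h2
  have hsGV0 : ((h 1 1*α 0*β 0 - h 0 1*α 0*β 1 - h 0 1*α 1*β 0 + h 0 0*α 1*β 1)*σ 0 0 - 2*(h 0 0*h 1 1 - h 0 1*h 0 1)*α 0*α 0)*(h 1 1*β 0 - h 0 1*β 1) + ((h 1 1*α 0*β 0 - h 0 1*α 0*β 1 - h 0 1*α 1*β 0 + h 0 0*α 1*β 1)*σ 0 1 - 2*(h 0 0*h 1 1 - h 0 1*h 0 1)*α 0*α 1)*(h 0 0*β 1 - h 0 1*β 0) = 0 := by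
    linear_combination (h 1 1*α 0*β 0 - h 0 1*α 0*β 1 - h 0 1*α 1*β 0 + h 0 0*α 1*β 1)*hQ0
  have hsG00 : ((h 1 1*α 0*β 0 - h 0 1*α 0*β 1 - h 0 1*α 1*β 0 + h 0 0*α 1*β 1)*σ 0 0 - 2*(h 0 0*h 1 1 - h 0 1*h 0 1)*α 0*α 0)*((h 0 0*h 1 1 - h 0 1*h 0 1)*(α 0*β 1 - α 1*β 0)) = 0 := by
    linear_combination (h 0 0*β 1 - h 0 1*β 0)*hsGW0' - (h 0 0*α 1 - h 0 1*α 0)*hsGV0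
  have hsG01 : ((h 1 1*α 0*β 0 - h 0 1*α 0*β 1 - h 0 1*α 1*β 0 + h 0 0*α 1*β 1)*σ 0 1 - 2*(h 0 0*h 1 1 - h 0 1*h 0 1)*α 0*α 1)*((h 0 0*h 1 1 - h 0 1*h 0 1)*(α 0*β 1 - α 1*β 0)) = 0 := by
    linear_combination (h 1 1*α 0 - h 0 1*α 1)*hsGV0 - (h 1 1*β 0 - h 0 1*β 1)*hsGW0'
  have hS00 : (h 1 1*α 0*β 0 - h 0 1*α 0*β 1 - h 0 1*α 1*β 0 + h 0 0*α 1*β 1)*σ 0 0 - 2*(h 0 0*h 1 1 - h 0 1*h 0 1)*α 0*α 0 = 0 := (mul_eq_zero.mp hsG00).resolve_right hdD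
  have hS01 : (h 1 1*α 0*β 0 - h 0 1*α 0*β 1 - h 0 1*α 1*β 0 + h 0 0*α 1*β 1)*σ 0 1 - 2*(h 0 0*h 1 1 - h 0 1*h 0 1)*α 0*α 1 = 0 := (mul_eq_zero.mp hsG01).resolve_right hdD

  have hsGW1 : (((h 1 1*α 0*β 0 - h 0 1*α 0*β 1 - h 0 1*α 1*β 0 + h 0 0*α 1*β 1)*σ 0 1 - 2*(h 0 0*h 1 1 - h 0 1*h 0 1)*α 1*α 0)*(h 1 1*α 0 - h 0 1*α 1) + ((h 1 1*α 0*β 0 - h 0 1*α 0*β 1 - h 0 1*α 1*β 0 + h 0 0*α 1*β 1)*σ 1 1 - 2*(h 0 0*h 1 1 - h 0 1*h 0 1)*α 1*α 1)*(h 0 0*α 1 - h 0 1*α 0))*(2*(h 1 1*α 0*β 0 - h 0 1*α 0*β 1 - h 0 1*α 1*β 0 + h 0 0*α 1*β 1)) = 0 := by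
    linear_combination ((h 1 1*α 0*β 0 - h 0 1*α 0*β 1 - h 0 1*α 1*β 0 + h 0 0*α 1*β 1)*(0))*hE0 + ((h 1 1*α 0*β 0 - h 0 1*α 0*β 1 - h 0 1*α 1*β 0 + h 0 0*α 1*β 1)*((h 1 1*α 0 - h 0 1*α 1)*(h 1 1*α 0 - h 0 1*α 1)))*hE1 + ((h 1 1*α 0*β 0 - h 0 1*α 0*β 1 - h 0 1*α 1*β 0 + h 0 0*α 1*β 1)*(2*(h 1 1*α 0 - h 0 1*α 1)*(h 0 0*α 1 - h 0 1*α 0)))*hE2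
      + ((h 1 1*α 0*β 0 - h 0 1*α 0*β 1 - h 0 1*α 1*β 0 + h 0 0*α 1*β 1)*(3*(h 0 0*α 1 - h 0 1*α 0)*(h 0 0*α 1 - h 0 1*α 0)))*hE3 + (-((h 0 0*h 1 1 - h 0 1*h 0 1)*(h 1 1*α 0*β 0 - h 0 1*α 0*β 1 - h 0 1*α 1*β 0 + h 0 0*α 1*β 1)*α 1))*hA + (-((h 1 1*α 0*β 0 - h 0 1*α 0*β 1 - h 0 1*α 1*β 0 + h 0 0*α 1*β 1)*β 1))*hT
  have hsGW1' : ((h 1 1*α 0*β 0 - h 0 1*α 0*β 1 - h 0 1*α 1*β 0 + h 0 0*α 1*β 1)*σ 0 1 - 2*(h 0 0*h 1 1 - h 0 1*h 0 1)*α 1*α 0)*(h 1 1*α 0 - h 0 1*α 1) + ((h 1 1*α 0*β 0 - h 0 1*α 0*β 1 - h 0 1*α 1*β 0 + h 0 0*α 1*β 1)*σ 1 1 - 2*(h 0 0*h 1 1 - h 0 1*h 0 1)*α 1*α 1)*(h 0 0*α 1 - h 0 1*α 0) = 0 := by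
    have h2 : (2:ℝ)*(h 1 1*α 0*β 0 - h 0 1*α 0*β 1 - h 0 1*α 1*β 0 + h 0 0*α 1*β 1) ≠ 0 := mul_ne_zero two_ne_zero hP
    exact (mul_eq_zero.mp hsGW1).resolve_right h2
  have hsGV1 : ((h 1 1*α 0*β 0 - h 0 1*α 0*β 1 - h 0 1*α 1*β 0 + h 0 0*α 1*β 1)*σ 0 1 - 2*(h 0 0*h 1 1 - h 0 1*h 0 1)*α 1*α 0)*(h 1 1*β 0 - h 0 1*β 1) + ((h 1 1*α 0*β 0 - h 0 1*α 0*β 1 - h 0 1*α 1*β 0 + h 0 0*α 1*β 1)*σ 1 1 - 2*(h 0 0*h 1 1 - h 0 1*h 0 1)*α 1*α 1)*(h 0 0*β 1 - h 0 1*β 0) = 0 := by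
    linear_combination (h 1 1*α 0*β 0 - h 0 1*α 0*β 1 - h 0 1*α 1*β 0 + h 0 0*α 1*β 1)*hQ1
  have hsG10 : ((h 1 1*α 0*β 0 - h 0 1*α 0*β 1 - h 0 1*α 1*β 0 + h 0 0*α 1*β 1)*σ 0 1 - 2*(h 0 0*h 1 1 - h 0 1*h 0 1)*α 1*α 0)*((h 0 0*h 1 1 - h 0 1*h 0 1)*(α 0*β 1 - α 1*β 0)) = 0 := by
    linear_combination (h 0 0*β 1 - h 0 1*β 0)*hsGW1' - (h 0 0*α 1 - h 0 1*α 0)*hsGV1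
  have hsG11 : ((h 1 1*α 0*β 0 - h 0 1*α 0*β 1 - h 0 1*α 1*β 0 + h 0 0*α 1*β 1)*σ 1 1 - 2*(h 0 0*h 1 1 - h 0 1*h 0 1)*α 1*α 1)*((h 0 0*h 1 1 - h 0 1*h 0 1)*(α 0*β 1 - α 1*β 0)) = 0 := by
    linear_combination (h 1 1*α 0 - h 0 1*α 1)*hsGV1 - (h 1 1*β 0 - h 0 1*β 1)*hsGW1'
  have hS10 : (h 1 1*α 0*β 0 - h 0 1*α 0*β 1 - h 0 1*α 1*β 0 + h 0 0*α 1*β 1)*σ 0 1 - 2*(h 0 0*h 1 1 - h 0 1*h 0 1)*α 1*α 0 = 0 := (mul_eq_zero.mp hsG10).resolve_right hdD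
  have hS11 : (h 1 1*α 0*β 0 - h 0 1*α 0*β 1 - h 0 1*α 1*β 0 + h 0 0*α 1*β 1)*σ 1 1 - 2*(h 0 0*h 1 1 - h 0 1*h 0 1)*α 1*α 1 = 0 := (mul_eq_zero.mp hsG11).resolve_right hdD

  refine ⟨?_, ?_, ?_⟩
  · rw [pairing_eq, div_eq_zero_iff]
    left
    linear_combination hA - α 0*α 1*hs10
  · refine Fin.forall_fin_two.mpr ⟨Fin.forall_fin_two.mpr ⟨?_, ?_⟩, Fin.forall_fin_two.mpr ⟨?_, ?_⟩⟩
    · rw [eq_div_iff hF, hFP, hdet2, ← mul_div_assoc, div_eq_iff hd]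
      linear_combination hH00
    · rw [eq_div_iff hF, hFP, hdet2, ← mul_div_assoc, div_eq_iff hd]
      linear_combination hH01
    · rw [eq_div_iff hF, hFP, hdet2, ← mul_div_assoc, div_eq_iff hd]
      linear_combination hH10 + (h 1 1*α 0*β 0 - h 0 1*α 0*β 1 - h 0 1*α 1*β 0 + h 0 0*α 1*β 1)*hs10
    · rw [eq_div_iff hF, hFP, hdet2, ← mul_div_assoc, div_eq_iff hd]
      linear_combination hH11
  · refine Fin.forall_fin_two.mpr ⟨Fin.forall_fin_two.mpr ⟨?_, ?_⟩, Fin.forall_fin_two.mpr ⟨?_, ?_⟩⟩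
    · rw [eq_div_iff hF, hFP, hdet2, ← mul_div_assoc, div_eq_iff hd]
      linear_combination hS00
    · rw [eq_div_iff hF, hFP, hdet2, ← mul_div_assoc, div_eq_iff hd]
      linear_combination hS01
    · rw [eq_div_iff hF, hFP, hdet2, ← mul_div_assoc, div_eq_iff hd]
      linear_combination hS10 + (h 1 1*α 0*β 0 - h 0 1*α 0*β 1 - h 0 1*α 1*β 0 + h 0 0*α 1*β 1)*hss10
    · rw [eq_div_iff hF, hFP, hdet2, ← mul_div_assoc, div_eq_iff hd]
      linear_combination hS11

end
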